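/- Let n be a real number with n ≥ 1/2, and define K on the open set U = {(x, y) ∈ ℝ² : |y| < x} by K(x, y) = 1/(x² − y²)ⁿ. Then the Hessian matrix of K (the 2×2 matrix of second partial derivatives) is positive semidefinite at every point of U. -/

import Mathlib

open Topology

section Helpers

open ContinuousLinearMap in
private lemma hasFDerivAt_usq' (p : ℝ × ℝ) :
    HasFDerivAt (fun q : ℝ × ℝ => q.1 ^ 2 - q.2 ^ 2)
      ((2 * p.1) • fst ℝ ℝ ℝ - (2 * p.2) • snd ℝ ℝ ℝ) p := by
  have h1 : HasFDerivAt (fun q : ℝ × ℝ => q.1 ^ 2) ((2 * p.1) • fst ℝ ℝ ℝ) p := by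
    have h := (hasFDerivAt_fst (𝕜 := ℝ) (p := p)).mul (hasFDerivAt_fst (𝕜 := ℝ) (p := p))
    rw [show (2 * p.1) • fst ℝ ℝ ℝ = p.1 • fst ℝ ℝ ℝ + p.1 • fst ℝ ℝ ℝ by
      rw [two_mul, add_smul]]
    simpa [pow_two, Pi.mul_def] using h
  have h2 : HasFDerivAt (fun q : ℝ × ℝ => q.2 ^ 2) ((2 * p.2) • snd ℝ ℝ ℝ) p := by
    have h := (hasFDerivAt_snd (𝕜 := ℝ) (p := p)).mul (hasFDerivAt_snd (𝕜 := ℝ) (p := p))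
    rw [show (2 * p.2) • snd ℝ ℝ ℝ = p.2 • snd ℝ ℝ ℝ + p.2 • snd ℝ ℝ ℝ by
      rw [two_mul, add_smul]]
    simpa [pow_two, Pi.mul_def] using h
  exact h1.sub h2

open ContinuousLinearMap in
private lemma hasFDerivAt_rpow_usq' (e : ℝ) (p : ℝ × ℝ) (hp : p.1 ^ 2 - p.2 ^ 2 ≠ 0) :
    HasFDerivAt (fun q : ℝ × ℝ => (q.1 ^ 2 - q.2 ^ 2) ^ e)
      ((e * (p.1 ^ 2 - p.2 ^ 2) ^ (e - 1)) •
        ((2 * p.1) • fst ℝ ℝ ℝ - (2 * p.2) • snd ℝ ℝ ℝ)) p :=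
  (hasFDerivAt_usq' p).rpow_const (Or.inl hp)

private lemma posSemidef_fin_two' {a b c : ℝ} (ha : 0 < a) (hdet : b ^ 2 ≤ a * c) :
    (!![a, b; b, c] : Matrix (Fin 2) (Fin 2) ℝ).PosSemidef := by
  rw [Matrix.posSemidef_iff_dotProduct_mulVec]
  constructor
  · unfold Matrix.IsHermitian
    ext i j
    fin_cases i <;> fin_cases j <;> simp [Matrix.conjTranspose_apply]
  · intro z
    simp [Matrix.mulVec, dotProduct, Fin.sum_univ_two]
    nlinarith [sq_nonneg (a * z 0 + b * z 1), mul_nonneg (sub_nonneg.2 hdet) (sq_nonneg (z 1)),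
      ha, sq_nonneg (z 1)]

end Helpers

/-- Partial derivative with respect to the first variable. -/
noncomputable def pdx (f : ℝ × ℝ → ℝ) (p : ℝ × ℝ) : ℝ := fderiv ℝ f p (1, 0)

/-- Partial derivative with respect to the second variable. -/
noncomputable def pdy (f : ℝ × ℝ → ℝ) (p : ℝ × ℝ) : ℝ := fderiv ℝ f p (0, 1)

/-- The Hessian matrix of second partial derivatives. -/
noncomputable def hessian (f : ℝ × ℝ → ℝ) (p : ℝ × ℝ) : Matrix (Fin 2) (Fin 2) ℝ :=
  !![pdx (pdx f) p, pdx (pdy f) p;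
     pdy (pdx f) p, pdy (pdy f) p]

set_option maxHeartbeats 1000000 in
open ContinuousLinearMap in
/-- Convexity of powers of Gauss curvature flow: for `n ≥ 1/2`, the Hessian of
`K = 1/(x²−y²)ⁿ` is positive semidefinite on `U = {(x,y) : |y| < x}`. -/
theorem powers_of_gauss_curvature_convex (n : ℝ) (hn : (1 : ℝ) / 2 ≤ n)
    (K : ℝ × ℝ → ℝ)
    (hK : K = fun q : ℝ × ℝ => 1 / (q.1 ^ 2 - q.2 ^ 2) ^ n) :
    ∀ p : ℝ × ℝ, |p.2| < p.1 → (hessian K p).PosSemidef := by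
  intro p hp
  have hx : 0 < p.1 := lt_of_le_of_lt (abs_nonneg p.2) hp
  have hu : 0 < p.1 ^ 2 - p.2 ^ 2 := by nlinarith [abs_nonneg p.2, sq_abs p.2]
  have hVopen : IsOpen {q : ℝ × ℝ | 0 < q.1 ^ 2 - q.2 ^ 2} :=
    isOpen_lt continuous_const ((continuous_fst.pow 2).sub (continuous_snd.pow 2))
  -- first derivative
  have hfd : ∀ q : ℝ × ℝ, 0 < q.1 ^ 2 - q.2 ^ 2 →
      fderiv ℝ K q = ((-n) * (q.1 ^ 2 - q.2 ^ 2) ^ (-n - 1)) •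
        ((2 * q.1) • fst ℝ ℝ ℝ - (2 * q.2) • snd ℝ ℝ ℝ) := by
    intro q hq
    have hEq : K =ᶠ[𝓝 q] fun r : ℝ × ℝ => (r.1 ^ 2 - r.2 ^ 2) ^ (-n) := by
      filter_upwards [hVopen.mem_nhds hq] with r hr
      rw [hK]
      show 1 / (r.1 ^ 2 - r.2 ^ 2) ^ n = (r.1 ^ 2 - r.2 ^ 2) ^ (-n)
      rw [Real.rpow_neg (le_of_lt hr), one_div]
    rw [hEq.fderiv_eq, (hasFDerivAt_rpow_usq' (-n) q hq.ne').fderiv]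
  have hpdx : ∀ q : ℝ × ℝ, 0 < q.1 ^ 2 - q.2 ^ 2 →
      pdx K q = -n * (q.1 ^ 2 - q.2 ^ 2) ^ (-n - 1) * (2 * q.1) := by
    intro q hq
    rw [pdx, hfd q hq]
    simp
  have hpdy : ∀ q : ℝ × ℝ, 0 < q.1 ^ 2 - q.2 ^ 2 →
      pdy K q = -n * (q.1 ^ 2 - q.2 ^ 2) ^ (-n - 1) * (-2 * q.2) := by
    intro q hq
    rw [pdy, hfd q hq]
    simp
  -- second derivatives
  have h1 : HasFDerivAt (fun q : ℝ × ℝ => -n * (q.1 ^ 2 - q.2 ^ 2) ^ (-n - 1))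
      ((-n) • ((-n - 1) * (p.1 ^ 2 - p.2 ^ 2) ^ (-n - 1 - 1)) •
        ((2 * p.1) • fst ℝ ℝ ℝ - (2 * p.2) • snd ℝ ℝ ℝ)) p :=
    (hasFDerivAt_rpow_usq' (-n - 1) p hu.ne').const_mul (-n)
  have h2x : HasFDerivAt (fun q : ℝ × ℝ => 2 * q.1) ((2 : ℝ) • fst ℝ ℝ ℝ) p :=
    (hasFDerivAt_fst (𝕜 := ℝ) (p := p)).const_mul (2 : ℝ)
  have h2y : HasFDerivAt (fun q : ℝ × ℝ => -2 * q.2) ((-2 : ℝ) • snd ℝ ℝ ℝ) p :=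
    (hasFDerivAt_snd (𝕜 := ℝ) (p := p)).const_mul (-2 : ℝ)
  have hKx := h1.mul h2x
  have hKy := h1.mul h2y
  have heqx : (fun q => pdx K q) =ᶠ[𝓝 p]
      (fun q : ℝ × ℝ => -n * (q.1 ^ 2 - q.2 ^ 2) ^ (-n - 1) * (2 * q.1)) := by
    filter_upwards [hVopen.mem_nhds hu] with r hr using hpdx r hr
  have heqy : (fun q => pdy K q) =ᶠ[𝓝 p]
      (fun q : ℝ × ℝ => -n * (q.1 ^ 2 - q.2 ^ 2) ^ (-n - 1) * (-2 * q.2)) := by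
    filter_upwards [hVopen.mem_nhds hu] with r hr using hpdy r hr
  have hA : pdx (pdx K) p = 4 * n * (n + 1) * p.1 ^ 2 * ((p.1 ^ 2 - p.2 ^ 2) ^ (-n - 1 - 1))
      - 2 * n * ((p.1 ^ 2 - p.2 ^ 2) ^ (-n - 1)) := by
    rw [pdx, heqx.fderiv_eq, HasFDerivAt.fderiv (f := fun q : ℝ × ℝ => -n * (q.1 ^ 2 - q.2 ^ 2) ^ (-n - 1) * (2 * q.1)) hKx]
    simp
    ring
  have hB : pdx (pdy K) p
      = -(4 * n * (n + 1) * p.1 * p.2 * ((p.1 ^ 2 - p.2 ^ 2) ^ (-n - 1 - 1))) := by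
    rw [pdx, heqy.fderiv_eq, HasFDerivAt.fderiv (f := fun q : ℝ × ℝ => -n * (q.1 ^ 2 - q.2 ^ 2) ^ (-n - 1) * (-2 * q.2)) hKy]
    simp
    ring
  have hC : pdy (pdx K) p
      = -(4 * n * (n + 1) * p.1 * p.2 * ((p.1 ^ 2 - p.2 ^ 2) ^ (-n - 1 - 1))) := by
    rw [pdy, heqx.fderiv_eq, HasFDerivAt.fderiv (f := fun q : ℝ × ℝ => -n * (q.1 ^ 2 - q.2 ^ 2) ^ (-n - 1) * (2 * q.1)) hKx]
    simp
    ring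
  have hD : pdy (pdy K) p = 4 * n * (n + 1) * p.2 ^ 2 * ((p.1 ^ 2 - p.2 ^ 2) ^ (-n - 1 - 1))
      + 2 * n * ((p.1 ^ 2 - p.2 ^ 2) ^ (-n - 1)) := by
    rw [pdy, heqy.fderiv_eq, HasFDerivAt.fderiv (f := fun q : ℝ × ℝ => -n * (q.1 ^ 2 - q.2 ^ 2) ^ (-n - 1) * (-2 * q.2)) hKy]
    simp
    ring
  rw [hessian, hA, hB, hC, hD]
  clear hfd hpdx hpdy h1 h2x h2y hKx hKy heqx heqy hA hB hC hD hK
  set w : ℝ := (p.1 ^ 2 - p.2 ^ 2) ^ (-n - 1 - 1) with hwdef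
  set v : ℝ := (p.1 ^ 2 - p.2 ^ 2) ^ (-n - 1) with hvdef
  have hw : 0 < w := Real.rpow_pos_of_pos hu _
  have hv : v = (p.1 ^ 2 - p.2 ^ 2) * w := by
    have h : (p.1 ^ 2 - p.2 ^ 2) ^ ((1 : ℝ) + (-n - 1 - 1))
        = (p.1 ^ 2 - p.2 ^ 2) ^ (1 : ℝ) * w := Real.rpow_add hu 1 _
    rw [Real.rpow_one] at h
    rw [hvdef, ← h]
    congr 1
    ring
  have hnn : (0 : ℝ) < n := by linarith
  set a : ℝ := 4 * n * (n + 1) * p.1 ^ 2 * w - 2 * n * v with hadef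
  set b : ℝ := -(4 * n * (n + 1) * p.1 * p.2 * w) with hbdef
  set c : ℝ := 4 * n * (n + 1) * p.2 ^ 2 * w + 2 * n * v with hcdef
  have ha : 0 < a := by
    rw [hadef, hv]
    have h1 : 0 < (4 * n ^ 2 + 2 * n) * (p.1 ^ 2 * w) :=
      mul_pos (by nlinarith) (mul_pos (pow_pos hx 2) hw)
    have h2 : 0 ≤ 2 * n * (p.2 ^ 2 * w) := by positivity
    nlinarith [h1, h2]
  have hdet : b ^ 2 ≤ a * c := by
    have hn3 : 0 ≤ 8 * n ^ 3 + 4 * n ^ 2 := by nlinarith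
    rw [hadef, hbdef, hcdef, hv]
    nlinarith [mul_nonneg hn3 (sq_nonneg ((p.1 ^ 2 - p.2 ^ 2) * w))]
  exact posSemidef_fin_two' ha hdet
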